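/- Let M ⊆ ℝ^D be a nonempty closed set, let t₀ > 0, τ ∈ (0, t₀), and ε ≥ 0. Let X : ℝ → ℝ^D be differentiable at every point of [0, t₀ − τ], let π : ℝ^D → ℝ^D be a map such that for every t ∈ [0, t₀ − τ] the point π(X(t)) is a nearest point of X(t) in M, i.e. π(X(t)) ∈ M and ‖X(t) − π(X(t))‖ = infDist(X(t), M), and let e : ℝ → ℝ^D satisfy ‖e(t)‖ ≤ ε for all t ∈ [0, t₀ − τ]. Suppose X solves the terminal-time probability-flow ODE: X′(t) = ( −( X(t) − π(X(t)) ) + e(t) ) / ( 2(t₀ − t) ) for all t ∈ [0, t₀ − τ]. Then infDist( X(t₀ − τ), M ) ≤ √2 · ε + infDist( X(0), M ) · √( τ / t₀ ). -/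

import Mathlib

open Set Metric

/-- Contraction to an ε-tube: the terminal-time probability-flow ODE driven by an
ε-accurate projection score drives the trajectory into an `O(ε)`-neighborhood of `M`. -/
theorem contract_to_eps_tube {D : ℕ}
    (M : Set (EuclideanSpace ℝ (Fin D))) (hM : M.Nonempty) (hMcl : IsClosed M)
    (t₀ τ ε : ℝ) (ht₀ : 0 < t₀) (hτ : τ ∈ Ioo (0 : ℝ) t₀) (hε : 0 ≤ ε)
    (X : ℝ → EuclideanSpace ℝ (Fin D))
    (π : EuclideanSpace ℝ (Fin D) → EuclideanSpace ℝ (Fin D))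
    (hπ : ∀ t ∈ Icc (0 : ℝ) (t₀ - τ),
      π (X t) ∈ M ∧ ‖X t - π (X t)‖ = infDist (X t) M)
    (e : ℝ → EuclideanSpace ℝ (Fin D))
    (he : ∀ t ∈ Icc (0 : ℝ) (t₀ - τ), ‖e t‖ ≤ ε)
    (hflow : ∀ t ∈ Icc (0 : ℝ) (t₀ - τ),
      HasDerivAt X ((2 * (t₀ - t))⁻¹ • (-(X t - π (X t)) + e t)) t) :
    infDist (X (t₀ - τ)) M ≤ Real.sqrt 2 * ε + infDist (X 0) M * Real.sqrt (τ / t₀) := by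
  set T : ℝ := t₀ - τ with hT
  have hT0 : 0 < T := sub_pos.2 hτ.2
  have hτ0 : 0 < τ := hτ.1
  set f : ℝ → ℝ := fun t => infDist (X t) M with hf
  set c : ℝ := infDist (X 0) M with hc
  have hc0 : 0 ≤ c := infDist_nonneg
  set w : ℝ := c / Real.sqrt t₀ with hw
  have hw0 : 0 ≤ w := div_nonneg hc0 (Real.sqrt_nonneg _)
  -- positivity of t₀ - x on the interval
  have hpos : ∀ x ∈ Icc (0 : ℝ) T, 0 < t₀ - x := by
    intro x hx
    have := hx.2
    nlinarith [hτ0]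
  -- continuity of f on [0, T]
  have hfc : ContinuousOn f (Icc 0 T) := by
    intro t ht
    exact (continuous_infDist_pt M).continuousAt.comp_continuousWithinAt
      ((hflow t ht).continuousAt.continuousWithinAt)
  -- the main estimate for each r > 0
  have key : ∀ r : ℝ, 0 < r → f T ≤ ε + r + w * Real.sqrt (t₀ - T) := by
    intro r hr
    set B : ℝ → ℝ := fun t => ε + r + w * Real.sqrt (t₀ - t) with hB
    set B' : ℝ → ℝ := fun t => w * (1 / (2 * Real.sqrt (t₀ - t)) * (-1)) with hB'
    set g : ℝ → ℝ := fun x => (ε - f x) / (2 * (t₀ - x)) with hg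
    have main := image_le_of_liminf_slope_right_lt_deriv_boundary' (a := 0) (b := T)
      (f := f) (f' := g) (B := B) (B' := B') hfc ?_ ?_ ?_ ?_ ?_
    · exact main (right_mem_Icc.2 hT0.le)
    · -- liminf slope bound
      intro x hx r' hr'
      have hxI : x ∈ Icc (0 : ℝ) T := ⟨hx.1, hx.2.le⟩
      have htx : 0 < t₀ - x := hpos x hxI
      obtain ⟨hpM, hdist⟩ := hπ x hxI
      set p := π (X x) with hp
      set v := X x - p with hv
      have hvf : ‖v‖ = f x := hdist
      set ψ : ℝ → ℝ := fun z => ‖X z - p‖ with hψ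
      have hfψ : ∀ z, f z ≤ ψ z := fun z => infDist_le_dist_of_mem hpM
      have hfxψ : f x = ψ x := hvf.symm
      have hX' := hflow x hxI
      -- eventually slope ψ x z < r'
      have hev : ∀ᶠ z in nhdsWithin x (Ioi x), slope ψ x z < r' := by
        by_cases hv0 : v = 0
        · -- f x = 0 case
          have hfx0 : f x = 0 := by rw [← hvf, hv0, norm_zero]
          have hpx : p = X x := by
            have h0 : X x - p = 0 := by rw [← hv]; exact hv0
            exact (sub_eq_zero.mp h0).symm
          have hL : ‖(2 * (t₀ - x))⁻¹ • (-(X x - π (X x)) + e x)‖ < r' := by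
            rw [norm_smul]
            have h1 : ‖-(X x - π (X x)) + e x‖ = ‖e x‖ := by
              rw [← hp, ← hv, hv0, neg_zero, zero_add]
            rw [h1]
            have h2 : ‖(2 * (t₀ - x))⁻¹‖ = (2 * (t₀ - x))⁻¹ := by
              rw [Real.norm_eq_abs, abs_of_pos (by positivity)]
            rw [h2]
            have h3 : (2 * (t₀ - x))⁻¹ * ‖e x‖ ≤ (2 * (t₀ - x))⁻¹ * ε := by
              gcongr
              exact he x hxI
            have h4 : g x = (2 * (t₀ - x))⁻¹ * ε := by
              rw [hg]; simp only [hfx0, sub_zero]; ring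
            calc (2 * (t₀ - x))⁻¹ * ‖e x‖ ≤ (2 * (t₀ - x))⁻¹ * ε := h3
              _ = g x := h4.symm
              _ < r' := hr'
          have htend : Filter.Tendsto (fun z => ‖slope X x z‖) (nhdsWithin x (Ioi x))
              (nhds ‖(2 * (t₀ - x))⁻¹ • (-(X x - π (X x)) + e x)‖) := by
            have := (hasDerivAt_iff_tendsto_slope.1 hX').mono_left
              (nhdsWithin_mono x (fun z hz => ne_of_gt hz : Ioi x ⊆ {x}ᶜ))
            exact (continuous_norm.tendsto _).comp this
          filter_upwards [htend.eventually_lt_const hL, self_mem_nhdsWithin] with z hz hzx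
          have hzx' : 0 < z - x := sub_pos.2 hzx
          have hψx0 : ψ x = 0 := by
            show ‖X x - p‖ = 0
            rw [← hv, hv0, norm_zero]
          have h1 : slope ψ x z = (z - x)⁻¹ * ‖X z - X x‖ := by
            rw [slope_def_field, hψx0, sub_zero, div_eq_inv_mul]
            congr 1
            show ‖X z - p‖ = ‖X z - X x‖
            rw [hpx]
          have h2 : ‖slope X x z‖ = (z - x)⁻¹ * ‖X z - X x‖ := by
            rw [slope_def_module, norm_smul, Real.norm_eq_abs,
              abs_of_pos (inv_pos.2 hzx')]
          rw [h1, ← h2]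
          exact hz
        · -- f x > 0 case: ψ is differentiable at x
          have hvn : 0 < ‖v‖ := norm_pos_iff.2 hv0
          have hq : HasDerivAt (fun z => (inner ℝ (X z - p) (X z - p) : ℝ))
              (inner ℝ (X x - p) ((2 * (t₀ - x))⁻¹ • (-(X x - π (X x)) + e x)) +
               inner ℝ ((2 * (t₀ - x))⁻¹ • (-(X x - π (X x)) + e x)) (X x - p)) x :=
            HasDerivAt.inner ℝ (hX'.sub_const p) (hX'.sub_const p)
          have hqx : (inner ℝ (X x - p) (X x - p) : ℝ) ≠ 0 := by
            rw [real_inner_self_eq_norm_sq]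
            positivity
          have hψq : ψ = fun z => Real.sqrt (inner ℝ (X z - p) (X z - p) : ℝ) := by
            funext z
            rw [hψ, real_inner_self_eq_norm_sq, Real.sqrt_sq (norm_nonneg _)]
          set L : ℝ := 1 / (2 * Real.sqrt (inner ℝ (X x - p) (X x - p) : ℝ)) *
            (inner ℝ (X x - p) ((2 * (t₀ - x))⁻¹ • (-(X x - π (X x)) + e x)) +
             inner ℝ ((2 * (t₀ - x))⁻¹ • (-(X x - π (X x)) + e x)) (X x - p)) with hL
          have hψd : HasDerivAt ψ L x := by
            rw [hψq]
            exact (Real.hasDerivAt_sqrt hqx).comp x hq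
          have hLle : L < r' := by
            have hsq : Real.sqrt (inner ℝ (X x - p) (X x - p) : ℝ) = ‖v‖ := by
              rw [real_inner_self_eq_norm_sq, Real.sqrt_sq (norm_nonneg _)]
            have hinner : (inner ℝ (X x - p) ((2 * (t₀ - x))⁻¹ • (-(X x - π (X x)) + e x)) : ℝ)
                = (2 * (t₀ - x))⁻¹ * (-(‖v‖^2) + inner ℝ v (e x)) := by
              rw [real_inner_smul_right, inner_add_right, inner_neg_right,
                real_inner_self_eq_norm_sq]
            have hinner2 : (inner ℝ ((2 * (t₀ - x))⁻¹ • (-(X x - π (X x)) + e x)) (X x - p) : ℝ)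
                = (2 * (t₀ - x))⁻¹ * (-(‖v‖^2) + inner ℝ v (e x)) := by
              rw [real_inner_smul_left, inner_add_left, inner_neg_left,
                real_inner_self_eq_norm_sq, real_inner_comm]
            have hcs : (inner ℝ v (e x) : ℝ) ≤ ‖v‖ * ε := by
              calc (inner ℝ v (e x) : ℝ) ≤ ‖v‖ * ‖e x‖ := real_inner_le_norm v (e x)
                _ ≤ ‖v‖ * ε := by gcongr; exact he x hxI
            have hLval : L = (2 * (t₀ - x))⁻¹ * (-(‖v‖^2) + inner ℝ v (e x)) / ‖v‖ := by
              rw [hL, hsq, hinner, hinner2]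
              field_simp
              ring
            have hgineq : (2 * (t₀ - x))⁻¹ * (-(‖v‖^2) + inner ℝ v (e x)) / ‖v‖ ≤ g x := by
              simp only [hg]
              rw [← hvf, div_le_div_iff₀ hvn (by positivity)]
              have h2 : (-(‖v‖^2) + inner ℝ v (e x) : ℝ) ≤ ‖v‖ * (ε - ‖v‖) := by
                nlinarith [hcs]
              calc (2 * (t₀ - x))⁻¹ * (-(‖v‖ ^ 2) + inner ℝ v (e x)) * (2 * (t₀ - x))
                  = -(‖v‖^2) + inner ℝ v (e x) := by field_simp
                _ ≤ ‖v‖ * (ε - ‖v‖) := h2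
                _ = (ε - ‖v‖) * ‖v‖ := by ring
            rw [hLval]
            exact lt_of_le_of_lt hgineq hr'
          have htend : Filter.Tendsto (slope ψ x) (nhdsWithin x (Ioi x)) (nhds L) :=
            (hasDerivAt_iff_tendsto_slope.1 hψd).mono_left
              (nhdsWithin_mono x (fun z hz => ne_of_gt hz : Ioi x ⊆ {x}ᶜ))
          exact htend.eventually_lt_const hLle
      -- from eventually to frequently, and slope f ≤ slope ψ
      have hfreq : ∃ᶠ z in nhdsWithin x (Ioi x), slope ψ x z < r' := hev.frequently
      refine hfreq.mp (Filter.Eventually.mono self_mem_nhdsWithin ?_)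
      intro z hz hψz
      have hzx : 0 < z - x := sub_pos.2 hz
      calc slope f x z = (f z - f x) / (z - x) := slope_def_field f x z
        _ ≤ (ψ z - ψ x) / (z - x) :=
            (div_le_div_iff_of_pos_right hzx).2 (by linarith [hfψ z, hfxψ])
        _ = slope ψ x z := (slope_def_field ψ x z).symm
        _ < r' := hψz
    · -- f 0 ≤ B 0
      have h1 : Real.sqrt (t₀ - 0) = Real.sqrt t₀ := by norm_num
      have h2 : w * Real.sqrt (t₀ - 0) = c := by
        rw [h1, hw, div_mul_eq_mul_div, mul_div_assoc,
          div_self (by positivity : Real.sqrt t₀ ≠ 0), mul_one]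
      show f 0 ≤ ε + r + w * Real.sqrt (t₀ - 0)
      rw [h2, hc]
      linarith [hε, hr]
    · -- continuity of B
      exact (continuous_const.add (continuous_const.mul
        (Real.continuous_sqrt.comp (continuous_const.sub continuous_id)))).continuousOn
    · -- derivative of B
      intro x hx
      have htx : 0 < t₀ - x := hpos x ⟨hx.1, hx.2.le⟩
      have h1 : HasDerivAt (fun t : ℝ => t₀ - t) (-1) x := (hasDerivAt_id x).const_sub t₀
      have h2 : HasDerivAt (fun t : ℝ => Real.sqrt (t₀ - t))
          (1 / (2 * Real.sqrt (t₀ - x)) * (-1)) x :=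
        (Real.hasDerivAt_sqrt (ne_of_gt htx)).comp x h1
      exact (((h2.const_mul w).const_add (ε + r)).hasDerivWithinAt)
    · -- bound: g x < B' x when f x = B x
      intro x hx hfB
      have htx : 0 < t₀ - x := hpos x ⟨hx.1, hx.2.le⟩
      have hsx : 0 < Real.sqrt (t₀ - x) := Real.sqrt_pos.2 htx
      have hss : Real.sqrt (t₀ - x) * Real.sqrt (t₀ - x) = t₀ - x :=
        Real.mul_self_sqrt htx.le
      have hfx : f x = ε + r + w * Real.sqrt (t₀ - x) := hfB
      show (ε - f x) / (2 * (t₀ - x)) < w * (1 / (2 * Real.sqrt (t₀ - x)) * (-1))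
      rw [hfx]
      rw [div_lt_iff₀ (by positivity : (0:ℝ) < 2 * (t₀ - x))]
      have : w * (1 / (2 * Real.sqrt (t₀ - x)) * (-1)) * (2 * (t₀ - x))
          = -(w * Real.sqrt (t₀ - x)) := by
        field_simp
        nlinarith [hss]
      rw [this]
      linarith [hr]
  -- take r → 0
  have hfinal : f T ≤ ε + w * Real.sqrt (t₀ - T) := by
    have := le_of_forall_pos_le_add (a := f T) (b := ε + w * Real.sqrt (t₀ - T)) ?_
    · exact this
    · intro r hr
      have := key r hr
      linarith
  have hTτ : t₀ - T = τ := by rw [hT]; ring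
  rw [hTτ] at hfinal
  have hsq : Real.sqrt (τ / t₀) = Real.sqrt τ / Real.sqrt t₀ := Real.sqrt_div hτ0.le t₀
  have hwc : w * Real.sqrt τ = c * Real.sqrt (τ / t₀) := by
    rw [hsq, hw]; ring
  have h12 : (1:ℝ) ≤ Real.sqrt 2 := by
    nlinarith [Real.sq_sqrt (by norm_num : (0:ℝ) ≤ 2), Real.sqrt_nonneg 2]
  have hε2 : ε ≤ Real.sqrt 2 * ε := by nlinarith
  calc infDist (X T) M = f T := rfl
    _ ≤ ε + w * Real.sqrt τ := hfinal
    _ = ε + c * Real.sqrt (τ / t₀) := by rw [hwc]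
    _ ≤ Real.sqrt 2 * ε + c * Real.sqrt (τ / t₀) := by linarith
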